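/- arXiv:2207.00685 — 3 statements merged into one kernel-verified Lean document; each statement's English description precedes it below -/
import Mathlib

section
/- The relaxed problem at q̄₀ — maximize ρ∫(H(q') − H(q̄₀)) dπ(q') over Borel probability measures π on Δ(X) with barycenter q̄₀ subject to (κ̄/χ)∫(H(q') − H(q̄₀)) dπ(q') ≤ ∫(û(q') − û(q̄₀)) dπ(q') — admits a maximizer π* whose support is a finite set. (Existence part of the paper's Proposition 1.) -/
open MeasureTheory ProbabilityTheory Filter Set
open scoped NNReal ENNReal

/-- `û(q) = max_{a ∈ A} ∑_{x ∈ X} q_x u_{a,x}`. -/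
noncomputable def uhat {X A : Type*} [Fintype X] [Fintype A] [Nonempty A]
    (u : A → X → ℝ) (q : X → ℝ) : ℝ :=
  ⨆ a : A, ∑ x : X, q x * u a x

/-- `π` is feasible in the relaxed problem at `q`: a Borel probability measure on the simplex
with barycenter `q`, satisfying `(κ/χ)∫(H(q') − H(q)) dπ ≤ ∫(û(q') − û(q)) dπ`. -/
def RelaxedFeasible {X : Type*} [Fintype X] (H uh : (X → ℝ) → ℝ) (κ χ : ℝ)
    (q : X → ℝ) (π : Measure (X → ℝ)) : Prop :=
  IsProbabilityMeasure π ∧ π (stdSimplex ℝ X) = 1 ∧ (∫ q', q' ∂π) = q ∧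
    (κ / χ) * (∫ q', (H q' - H q) ∂π) ≤ ∫ q', (uh q' - uh q) ∂π

lemma sum_extend' {M : Type*} [AddCommMonoid M] {k N : ℕ} (hkN : k ≤ N) (g : Fin k → M) :
    ∑ j : Fin N, (if h : (j : ℕ) < k then g ⟨j, h⟩ else 0) = ∑ j : Fin k, g j := by
  rw [Fin.sum_univ_eq_sum_range (fun n => if h : n < k then g ⟨n, h⟩ else 0) N]
  rw [show (∑ j : Fin k, g j) = ∑ j : Fin k, (fun n => if h : n < k then g ⟨n, h⟩ else 0) (j : ℕ) by
    refine Finset.sum_congr rfl fun j _ => ?_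
    simp [j.isLt]]
  rw [Fin.sum_univ_eq_sum_range (fun n => if h : n < k then g ⟨n, h⟩ else 0) k]
  refine (Finset.sum_subset (Finset.range_subset_range.2 hkN) fun x _ hx => ?_).symm
  rw [Finset.mem_range, not_lt] at hx
  simp [not_lt.2 hx]

/-- Carathéodory: the convex hull is the image of the `N`-fold convex-combination map. -/
lemma convexHull_eq_image' {V : Type*} [NormedAddCommGroup V] [NormedSpace ℝ V]
    [FiniteDimensional ℝ V] (s : Set V) {N : ℕ} (hN : Module.finrank ℝ V + 1 ≤ N) :
    convexHull ℝ s =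
      (fun p : (Fin N → ℝ) × (Fin N → V) => ∑ i, p.1 i • p.2 i) ''
        {p : (Fin N → ℝ) × (Fin N → V) | p.1 ∈ stdSimplex ℝ (Fin N) ∧ ∀ i, p.2 i ∈ s} := by
  apply Subset.antisymm
  · intro x hx
    obtain ⟨ι, hι, z, w, hzs, hai, hwpos, hw1, hx⟩ := eq_pos_convex_span_of_mem_convexHull hx
    have hne : Nonempty ι := by
      by_contra h
      rw [not_nonempty_iff] at h
      rw [Finset.univ_eq_empty, Finset.sum_empty] at hw1
      exact one_ne_zero hw1.symm
    obtain ⟨i0⟩ := hne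
    have hcard : Fintype.card ι ≤ N := by
      have h1 := hai.card_le_finrank_succ
      have h2 := Submodule.finrank_le (vectorSpan ℝ (Set.range z))
      omega
    set k := Fintype.card ι with hk
    have e : ι ≃ Fin k := Fintype.equivFin ι
    refine ⟨(fun j => if h : (j : ℕ) < k then w (e.symm ⟨j, h⟩) else 0,
             fun j => if h : (j : ℕ) < k then z (e.symm ⟨j, h⟩) else z i0), ⟨⟨?_, ?_⟩, ?_⟩, ?_⟩
    · intro j; dsimp only; split
      · exact (hwpos _).le
      · exact le_rfl
    · dsimp only
      rw [sum_extend' hcard (fun j => w (e.symm j))]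
      rw [Equiv.sum_comp e.symm w]; exact hw1
    · intro j; dsimp only; split
      · exact hzs (Set.mem_range_self _)
      · exact hzs (Set.mem_range_self _)
    · dsimp only
      have : ∀ j : Fin N,
          (if h : (j : ℕ) < k then w (e.symm ⟨j, h⟩) else 0) •
            (if h : (j : ℕ) < k then z (e.symm ⟨j, h⟩) else z i0)
          = if h : (j : ℕ) < k then w (e.symm ⟨j, h⟩) • z (e.symm ⟨j, h⟩) else 0 := by
        intro j; by_cases h : (j : ℕ) < k <;> simp [h]
      rw [Finset.sum_congr rfl fun j _ => this j]
      rw [sum_extend' hcard (fun j => w (e.symm j) • z (e.symm j))]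
      rw [Equiv.sum_comp e.symm (fun i => w i • z i)]; exact hx
  · rintro _ ⟨⟨w, z⟩, ⟨hw, hz⟩, rfl⟩
    show ∑ i, w i • z i ∈ convexHull ℝ s
    have : ∑ i, w i • z i = Finset.univ.centerMass w z := by
      rw [Finset.centerMass_eq_of_sum_1 _ _ hw.2]
    rw [this]
    exact Finset.centerMass_mem_convexHull _ (fun i _ => hw.1 i) (by rw [hw.2]; norm_num)
      (fun i _ => hz i)

lemma integrable_dirac'' {α : Type*} [MeasurableSpace α] [MeasurableSingletonClass α]
    {V : Type*} [NormedAddCommGroup V] {f : α → V} (hf : StronglyMeasurable f) (a : α) :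
    Integrable f (Measure.dirac a) := by
  refine ⟨hf.aestronglyMeasurable, ?_⟩
  rw [HasFiniteIntegral, lintegral_dirac]
  exact ENNReal.coe_lt_top

lemma integral_sum_smul_dirac {α : Type*} [MeasurableSpace α] [MeasurableSingletonClass α]
    {V : Type*} [NormedAddCommGroup V] [NormedSpace ℝ V] [CompleteSpace V]
    {N : ℕ} (w : Fin N → ℝ) (hw : ∀ i, 0 ≤ w i) (z : Fin N → α)
    {f : α → V} (hf : StronglyMeasurable f) :
    ∫ x, f x ∂(∑ i : Fin N, ENNReal.ofReal (w i) • Measure.dirac (z i))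
      = ∑ i : Fin N, w i • f (z i) := by
  rw [integral_finset_sum_measure fun i _ =>
    (integrable_dirac'' hf (z i)).smul_measure ENNReal.ofReal_ne_top]
  refine Finset.sum_congr rfl fun i _ => ?_
  rw [integral_smul_measure, integral_dirac' f _ hf, ENNReal.toReal_ofReal (hw i)]

lemma measure_sum_smul_dirac {α : Type*} [MeasurableSpace α] [MeasurableSingletonClass α]
    {N : ℕ} (w : Fin N → ℝ) (hw : ∀ i, 0 ≤ w i) (hw1 : ∑ i, w i = 1) (z : Fin N → α)
    {s : Set α} (hz : ∀ i, z i ∈ s) :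
    (∑ i : Fin N, ENNReal.ofReal (w i) • Measure.dirac (z i)) s = 1 := by
  rw [Measure.finset_sum_apply]
  have : ∀ i : Fin N, (ENNReal.ofReal (w i) • Measure.dirac (z i)) s = ENNReal.ofReal (w i) := by
    intro i
    rw [Measure.smul_apply, Measure.dirac_apply, Set.indicator_of_mem (hz i)]
    simp
  rw [Finset.sum_congr rfl fun i _ => this i, ← ENNReal.ofReal_sum_of_nonneg fun i _ => hw i,
    hw1, ENNReal.ofReal_one]

lemma ae_mem_of_measure_one {α : Type*} [MeasurableSpace α] {K : Set α} (hKm : MeasurableSet K)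
    {π : Measure α} [IsProbabilityMeasure π] (hπK : π K = 1) : ∀ᵐ x ∂π, x ∈ K := by
  rw [ae_iff]
  have h : {x | ¬ x ∈ K} = Kᶜ := rfl
  rw [h, measure_compl hKm (measure_ne_top _ _), hπK, measure_univ, tsub_self]

lemma integrable_on_concentrated {α : Type*} [MeasurableSpace α] [TopologicalSpace α]
    [OpensMeasurableSpace α] [SecondCountableTopology α]
    {K : Set α} (hK : IsCompact K) (hKm : MeasurableSet K)
    {π : Measure α} [IsProbabilityMeasure π] (hπK : π K = 1)
    {V : Type*} [NormedAddCommGroup V] {f : α → V} (hf : Continuous f) :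
    Integrable f π := by
  obtain ⟨C, hC⟩ := hK.exists_bound_of_continuousOn hf.continuousOn
  exact (integrable_const C).mono' hf.aestronglyMeasurable
    ((ae_mem_of_measure_one hKm hπK).mono fun x hx => hC x hx)

/-- **existence part of the paper's Proposition 1.** The relaxed problem at `q̄₀`
(maximize `ρ∫(H(q') − H(q̄₀)) dπ` over feasible `π`) admits a maximizer `π*` whose support
is a finite set. -/
theorem stmt1
    {X A : Type*} [Fintype X] [Fintype A] [Nonempty A]
    (hX : 2 ≤ Fintype.card X)
    (u : A → X → ℝ)
    (H : (X → ℝ) → ℝ) (hH : ContDiff ℝ 2 H)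
    (m : ℝ) (hm : 0 < m) (hHconv : StrongConvexOn (stdSimplex ℝ X) m H)
    (κ χ ρ : ℝ) (hκ : 0 < κ) (hχ : 0 < χ) (hρ : 0 < ρ)
    (qbar : X → ℝ) (hqbar : qbar ∈ stdSimplex ℝ X) :
    ∃ πstar : Measure (X → ℝ),
      RelaxedFeasible H (uhat u) κ χ qbar πstar ∧
      (∀ π : Measure (X → ℝ), RelaxedFeasible H (uhat u) κ χ qbar π →
        ρ * (∫ q', (H q' - H qbar) ∂π) ≤ ρ * (∫ q', (H q' - H qbar) ∂πstar)) ∧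
      (∃ S : Finset (X → ℝ), πstar (↑S) = 1) := by
  classical
  have hKc : IsCompact (stdSimplex ℝ X) := isCompact_stdSimplex ℝ X
  have hKm : MeasurableSet (stdSimplex ℝ X) := (isClosed_stdSimplex ℝ X).measurableSet
  have hHc : Continuous H := hH.continuous
  have hUc : Continuous (uhat u) := by
    have h : uhat u = fun q => Finset.univ.sup' Finset.univ_nonempty
        (fun a : A => ∑ x : X, q x * u a x) := by
      funext q; rw [Finset.sup'_univ_eq_ciSup]; rfl
    rw [h]
    exact Continuous.finset_sup'_apply Finset.univ_nonempty fun a _ =>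
      continuous_finset_sum _ fun x _ => (continuous_apply x).mul continuous_const
  set F : (X → ℝ) → (X → ℝ) × ℝ × ℝ := fun q => (q, H q, uhat u q) with hFdef
  have hFc : Continuous F := continuous_id.prodMk (hHc.prodMk hUc)
  set N : ℕ := Module.finrank ℝ ((X → ℝ) × ℝ × ℝ) + 1 with hNdef
  set Ψ : (Fin N → ℝ) × (Fin N → (X → ℝ)) → (X → ℝ) × ℝ × ℝ :=
    fun p => ∑ i, p.1 i • F (p.2 i) with hΨdef
  have hΨc : Continuous Ψ := continuous_finset_sum _ fun i _ =>
    ((continuous_apply i).comp continuous_fst).smul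
      (hFc.comp ((continuous_apply i).comp continuous_snd))
  set D0 : Set ((Fin N → ℝ) × (Fin N → (X → ℝ))) :=
    (stdSimplex ℝ (Fin N)) ×ˢ (Set.univ.pi fun _ : Fin N => stdSimplex ℝ X) with hD0def
  have hD0c : IsCompact D0 := (isCompact_stdSimplex ℝ _).prod (isCompact_univ_pi fun _ => hKc)
  -- the moment body
  have hC : convexHull ℝ (F '' stdSimplex ℝ X) = Ψ '' D0 := by
    rw [convexHull_eq_image' (F '' stdSimplex ℝ X) (le_refl N)]
    apply Subset.antisymm
    · rintro _ ⟨⟨w, y⟩, ⟨hw, hy⟩, rfl⟩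
      choose z hzK hzF using hy
      refine ⟨(w, z), ⟨hw, fun i _ => hzK i⟩, ?_⟩
      show (∑ i, w i • F (z i)) = ∑ i, w i • y i
      exact Finset.sum_congr rfl fun i _ => by rw [hzF i]
    · rintro _ ⟨⟨w, z⟩, ⟨hw, hz⟩, rfl⟩
      exact ⟨(w, fun i => F (z i)), ⟨hw, fun i => ⟨z i, hz i (Set.mem_univ i), rfl⟩⟩, rfl⟩
  have hCcomp : IsCompact (convexHull ℝ (F '' stdSimplex ℝ X)) := hC ▸ hD0c.image hΨc
  -- the constraint set
  set T : Set ((X → ℝ) × ℝ × ℝ) :=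
    {v | v.1 = qbar ∧ (κ / χ) * (v.2.1 - H qbar) ≤ v.2.2 - uhat u qbar} with hTdef
  have hTclosed : IsClosed T :=
    (isClosed_eq continuous_fst continuous_const).inter
      (isClosed_le
        (continuous_const.mul ((continuous_fst.comp continuous_snd).sub continuous_const))
        ((continuous_snd.comp continuous_snd).sub continuous_const))
  set D : Set ((Fin N → ℝ) × (Fin N → (X → ℝ))) := D0 ∩ Ψ ⁻¹' T with hDdef
  have hDc : IsCompact D := hD0c.inter_right (hTclosed.preimage hΨc)
  have hN0 : (N : ℝ) ≠ 0 := by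
    have : N ≠ 0 := by omega
    exact_mod_cast this
  have hDne : D.Nonempty := by
    refine ⟨(fun _ => (N : ℝ)⁻¹, fun _ => qbar), ⟨⟨fun i => by positivity, ?_⟩,
      fun i _ => hqbar⟩, ?_⟩
    · rw [Finset.sum_const, Finset.card_univ, Fintype.card_fin, nsmul_eq_mul,
        mul_inv_cancel₀ hN0]
    · have hΨ0 : Ψ (fun _ => (N : ℝ)⁻¹, fun _ => qbar) = F qbar := by
        show (∑ _i : Fin N, (N : ℝ)⁻¹ • F qbar) = F qbar
        rw [← Finset.sum_smul, Finset.sum_const, Finset.card_univ, Fintype.card_fin,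
          nsmul_eq_mul, mul_inv_cancel₀ hN0, one_smul]
      rw [Set.mem_preimage, hΨ0]
      exact ⟨rfl, by show (κ / χ) * (H qbar - H qbar) ≤ uhat u qbar - uhat u qbar; simp⟩
  obtain ⟨pstar, hpD, hpmax⟩ := hDc.exists_isMaxOn hDne
    (((continuous_fst.comp continuous_snd).comp hΨc).continuousOn)
  obtain ⟨⟨hwstar, hzstar⟩, hpT⟩ := hpD
  have hw0 : ∀ i, 0 ≤ pstar.1 i := fun i => hwstar.1 i
  set πstar : Measure (X → ℝ) :=
    ∑ i : Fin N, ENNReal.ofReal (pstar.1 i) • Measure.dirac (pstar.2 i) with hπdef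
  have hprob : IsProbabilityMeasure πstar :=
    ⟨measure_sum_smul_dirac _ hw0 hwstar.2 _ fun i => Set.mem_univ _⟩
  have hπK : πstar (stdSimplex ℝ X) = 1 :=
    measure_sum_smul_dirac _ hw0 hwstar.2 _ fun i => hzstar i (Set.mem_univ i)
  -- integrals against πstar
  have hIq : (∫ q', q' ∂πstar) = (Ψ pstar).1 := by
    rw [hπdef, integral_sum_smul_dirac (f := fun q' : X → ℝ => q') _ hw0 _ stronglyMeasurable_id]
    simp [hΨdef, hFdef, Prod.fst_sum]
  have hIH : (∫ q', H q' ∂πstar) = (Ψ pstar).2.1 := by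
    rw [hπdef, integral_sum_smul_dirac _ hw0 _ hHc.stronglyMeasurable]
    simp [hΨdef, hFdef, Prod.fst_sum, Prod.snd_sum]
  have hIU : (∫ q', uhat u q' ∂πstar) = (Ψ pstar).2.2 := by
    rw [hπdef, integral_sum_smul_dirac _ hw0 _ hUc.stronglyMeasurable]
    simp [hΨdef, hFdef, Prod.snd_sum]
  -- splitting integrals of differences
  have hsub : ∀ (π : Measure (X → ℝ)), IsProbabilityMeasure π → π (stdSimplex ℝ X) = 1 →
      ∀ g : (X → ℝ) → ℝ, Continuous g →
      ∫ q', (g q' - g qbar) ∂π = (∫ q', g q' ∂π) - g qbar := by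
    intro π hπ hπK' g hg
    haveI := hπ
    rw [integral_sub (integrable_on_concentrated hKc hKm hπK' hg) (integrable_const _),
      integral_const]
    simp
  refine ⟨πstar, ⟨hprob, hπK, by rw [hIq]; exact hpT.1, ?_⟩, ?_, ?_⟩
  · rw [hsub πstar hprob hπK H hHc, hsub πstar hprob hπK (uhat u) hUc, hIH, hIU]
    exact hpT.2
  · rintro π ⟨hπprob, hπK', hπbar, hπcon⟩
    haveI := hπprob
    have hIH' : Integrable H π := integrable_on_concentrated hKc hKm hπK' hHc
    have hIU' : Integrable (uhat u) π := integrable_on_concentrated hKc hKm hπK' hUc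
    have hIid : Integrable (fun q' : X → ℝ => q') π :=
      integrable_on_concentrated hKc hKm hπK' continuous_id
    have hmemC : (∫ q', F q' ∂π) ∈ convexHull ℝ (F '' stdSimplex ℝ X) :=
      (convex_convexHull ℝ _).integral_mem hCcomp.isClosed
        ((ae_mem_of_measure_one hKm hπK').mono fun x hx =>
          subset_convexHull ℝ _ (Set.mem_image_of_mem F hx))
        (hIid.prodMk (hIH'.prodMk hIU'))
    have hval : (∫ q', F q' ∂π)
        = ((∫ q', q' ∂π), (∫ q', H q' ∂π), (∫ q', uhat u q' ∂π)) := by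
      rw [hFdef]
      show (∫ q', ((fun q' : X → ℝ => q') q', (fun q' => (H q', uhat u q')) q') ∂π) = _
      rw [integral_pair hIid (hIH'.prodMk hIU'), integral_pair hIH' hIU']
    rw [hC] at hmemC
    obtain ⟨p, hpD0, hΨp⟩ := hmemC
    have hpinD : p ∈ D := by
      refine ⟨hpD0, ?_⟩
      rw [Set.mem_preimage, hΨp, hval]
      refine ⟨hπbar, ?_⟩
      show (κ / χ) * ((∫ q', H q' ∂π) - H qbar) ≤ (∫ q', uhat u q' ∂π) - uhat u qbar
      rw [← hsub π hπprob hπK' H hHc, ← hsub π hπprob hπK' (uhat u) hUc]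
      exact hπcon
    have hobj : (Ψ p).2.1 ≤ (Ψ pstar).2.1 := hpmax hpinD
    rw [hΨp, hval] at hobj
    rw [hsub π hπprob hπK' H hHc, hsub πstar hprob hπK H hHc, hIH]
    exact mul_le_mul_of_nonneg_left (sub_le_sub_right hobj _) hρ.le
  · refine ⟨Finset.image pstar.2 Finset.univ, ?_⟩
    exact measure_sum_smul_dirac _ hw0 hwstar.2 _ fun i =>
      Finset.mem_coe.2 (Finset.mem_image_of_mem pstar.2 (Finset.mem_univ i))
end

section
/- Let π* be a finitely supported maximizer of the relaxed problem at q̄₀. Then for every q' in the support of π*, the value of the relaxed problem at q' is zero: J̄(q') = 0. (Key step in the proof of the paper's Proposition 3.) -/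
open MeasureTheory ProbabilityTheory Filter Set
open scoped NNReal ENNReal

/-- `J̄(q)`, the value of the relaxed problem at `q`. -/
noncomputable def Jbar {X : Type*} [Fintype X] (H uh : (X → ℝ) → ℝ) (κ χ ρ : ℝ)
    (q : X → ℝ) : ℝ :=
  sSup {v | ∃ π : Measure (X → ℝ), RelaxedFeasible H uh κ χ q π ∧
    v = ρ * ∫ q', (H q' - H q) ∂π}

/-- The (topological) support of a measure `π` on beliefs. -/
def suppM {X : Type*} [Fintype X] (π : Measure (X → ℝ)) : Set (X → ℝ) :=
  {q | ∀ U : Set (X → ℝ), IsOpen U → q ∈ U → π U ≠ 0}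

/-- A continuous function is integrable w.r.t. a probability measure carried by the simplex. -/
lemma integrable_of_cont {X : Type*} [Fintype X] {E : Type*} [NormedAddCommGroup E]
    (π : Measure (X → ℝ)) [IsProbabilityMeasure π] (hπ : π (stdSimplex ℝ X) = 1)
    (f : (X → ℝ) → E) (hf : Continuous f) : Integrable f π := by
  obtain ⟨C, hC⟩ : ∃ C, ∀ q ∈ stdSimplex ℝ X, ‖f q‖ ≤ C := by
    rcases (isCompact_stdSimplex ℝ X).exists_bound_of_continuousOn
      (hf.norm.continuousOn) with ⟨C, hC⟩
    exact ⟨C, fun q hq => by simpa using hC q hq⟩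
  refine (integrable_const C).mono' hf.aestronglyMeasurable ?_
  have hcompl : π (stdSimplex ℝ X)ᶜ = 0 := by
    rw [prob_compl_eq_zero_iff ((isCompact_stdSimplex ℝ X).isClosed.measurableSet)]
    exact hπ
  filter_upwards [measure_eq_zero_iff_ae_notMem.mp hcompl] with q hq
  exact hC q (not_not.mp hq)

lemma uhat_continuous {X A : Type*} [Fintype X] [Fintype A] [Nonempty A]
    (u : A → X → ℝ) : Continuous (uhat u) := by
  have h : uhat u = fun q => Finset.univ.sup' Finset.univ_nonempty
      (fun a => ∑ x : X, q x * u a x) := by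
    funext q
    rw [uhat, Finset.sup'_univ_eq_ciSup]
  rw [h]
  exact Continuous.finset_sup'_apply Finset.univ_nonempty
    (fun a _ => continuous_finset_sum _ fun x _ => (continuous_apply x).mul continuous_const)

/-- Integral of a continuous function against the "surgery" measure. -/
lemma integral_mix {X : Type*} [Fintype X] {E : Type*} [NormedAddCommGroup E]
    [NormedSpace ℝ E] [CompleteSpace E]
    (πs π' : Measure (X → ℝ)) [IsProbabilityMeasure πs] [IsProbabilityMeasure π']
    (hπs : πs (stdSimplex ℝ X) = 1) (hπ' : π' (stdSimplex ℝ X) = 1)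
    (q' : X → ℝ)
    (f : (X → ℝ) → E) (hf : Continuous f) :
    ∫ q'', f q'' ∂(πs.restrict {q'}ᶜ + πs {q'} • π')
      = (∫ q'', f q'' ∂πs) - (πs {q'}).toReal • f q'
        + (πs {q'}).toReal • ∫ q'', f q'' ∂π' := by
  have hne : πs {q'} ≠ ∞ := (measure_lt_top πs _).ne
  have hints : Integrable f πs := integrable_of_cont πs hπs f hf
  have hint' : Integrable f π' := integrable_of_cont π' hπ' f hf
  rw [integral_add_measure (hints.restrict) (hint'.smul_measure hne),
    integral_smul_measure]
  have h1 : ∫ q'', f q'' ∂(πs.restrict {q'}ᶜ)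
      = (∫ q'', f q'' ∂πs) - ∫ q'', f q'' ∂(πs.restrict {q'}) := by
    rw [← integral_add_compl (measurableSet_singleton q') hints]; abel
  have h2 : ∫ q'', f q'' ∂(πs.restrict {q'}) = (πs {q'}).toReal • f q' := by
    rw [Measure.restrict_singleton, integral_smul_measure, integral_dirac]
  rw [h1, h2]

/-- **key step in the proof of the paper's Proposition 3.** If `π*` is a
finitely supported maximizer of the relaxed problem at `q̄₀`, then for every `q'` in the
support of `π*`, the value of the relaxed problem at `q'` is zero: `J̄(q') = 0`. -/
theorem stmt7
    {X A : Type*} [Fintype X] [Fintype A] [Nonempty A]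
    (hX : 2 ≤ Fintype.card X)
    (u : A → X → ℝ)
    (H : (X → ℝ) → ℝ) (hH : ContDiff ℝ 2 H)
    (m : ℝ) (hm : 0 < m) (hHconv : StrongConvexOn (stdSimplex ℝ X) m H)
    (κ χ ρ : ℝ) (hκ : 0 < κ) (hχ : 0 < χ) (hρ : 0 < ρ)
    (qbar : X → ℝ) (hqbar : qbar ∈ stdSimplex ℝ X)
    (πstar : Measure (X → ℝ))
    (hfeas : RelaxedFeasible H (uhat u) κ χ qbar πstar)
    (hmax : ∀ π : Measure (X → ℝ), RelaxedFeasible H (uhat u) κ χ qbar π →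
      ρ * (∫ q', (H q' - H qbar) ∂π) ≤ ρ * (∫ q', (H q' - H qbar) ∂πstar))
    (hfin : ∃ S : Finset (X → ℝ), πstar (↑S) = 1) :
    ∀ q' ∈ suppM πstar, Jbar H (uhat u) κ χ ρ q' = 0 := by
  obtain ⟨hprob, hsupp, hbar, hcon⟩ := hfeas
  have hHc : Continuous H := hH.continuous
  have hUc : Continuous (uhat u) := uhat_continuous u
  intro q' hq'
  -- the complement of the simplex is null
  have hmsimp : MeasurableSet (stdSimplex ℝ X) :=
    (isCompact_stdSimplex ℝ X).isClosed.measurableSet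
  have hcompl : πstar (stdSimplex ℝ X)ᶜ = 0 :=
    (prob_compl_eq_zero_iff hmsimp).mpr hsupp
  -- q' lies in the simplex
  have hq'simp : q' ∈ stdSimplex ℝ X := by
    by_contra h
    exact hq' (stdSimplex ℝ X)ᶜ (isCompact_stdSimplex ℝ X).isClosed.isOpen_compl h hcompl
  -- πstar has an atom at q'
  obtain ⟨S, hS⟩ := hfin
  have hScompl : πstar (↑S : Set (X → ℝ))ᶜ = 0 :=
    (prob_compl_eq_zero_iff (S.finite_toSet.measurableSet)).mpr hS
  have hp : πstar {q'} ≠ 0 := by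
    intro h0
    have hUopen : IsOpen ((↑(S.erase q') : Set (X → ℝ))ᶜ) :=
      (Set.Finite.isClosed (S.erase q').finite_toSet).isOpen_compl
    have hq'U : q' ∈ (↑(S.erase q') : Set (X → ℝ))ᶜ := by
      simp [Finset.mem_erase]
    refine hq' _ hUopen hq'U ?_
    have hsub : (↑(S.erase q') : Set (X → ℝ))ᶜ ⊆ {q'} ∪ (↑S : Set (X → ℝ))ᶜ := by
      intro x hx
      by_cases hxS : x ∈ (↑S : Set (X → ℝ))
      · by_cases hxq : x = q'
        · exact Or.inl hxq
        · exact absurd (Finset.mem_erase.mpr ⟨hxq, hxS⟩) hx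
      · exact Or.inr hxS
    refine le_antisymm ?_ zero_le
    calc πstar _ ≤ πstar ({q'} ∪ (↑S : Set (X → ℝ))ᶜ) := measure_mono hsub
      _ ≤ πstar {q'} + πstar (↑S : Set (X → ℝ))ᶜ := measure_union_le _ _
      _ = 0 := by rw [h0, hScompl, add_zero]
  have hpne : πstar {q'} ≠ ∞ := (measure_lt_top πstar _).ne
  set p : ℝ := (πstar {q'}).toReal with hpdef
  have hppos : 0 < p := ENNReal.toReal_pos hp hpne
  -- the value set
  set V : Set ℝ := {v | ∃ π : Measure (X → ℝ), RelaxedFeasible H (uhat u) κ χ q' π ∧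
    v = ρ * ∫ q'', (H q'' - H q') ∂π} with hVdef
  -- 0 is attained by the Dirac measure at q'
  have h0mem : (0 : ℝ) ∈ V := by
    refine ⟨Measure.dirac q', ⟨inferInstance, ?_, ?_, ?_⟩, ?_⟩
    · rw [Measure.dirac_apply_of_mem hq'simp]
    · rw [integral_dirac]
    · rw [integral_dirac, integral_dirac]; simp
    · rw [integral_dirac]; simp
  -- every feasible value is ≤ 0
  have hub : ∀ v ∈ V, v ≤ 0 := by
    rintro v ⟨π', ⟨hπ'prob, hπ'supp, hπ'bar, hπ'con⟩, rfl⟩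
    by_contra hvpos
    push_neg at hvpos
    have hBH : 0 < ∫ q'', (H q'' - H q') ∂π' := by
      by_contra h
      push_neg at h
      nlinarith
    -- construct the improved measure
    set πnew : Measure (X → ℝ) := πstar.restrict {q'}ᶜ + πstar {q'} • π' with hπnew
    have hprob' : IsProbabilityMeasure πnew := by
      constructor
      rw [hπnew]
      simp only [Measure.add_apply, Measure.restrict_apply MeasurableSet.univ,
        Set.univ_inter, Measure.smul_apply, measure_univ, smul_eq_mul, mul_one]
      rw [measure_compl (measurableSet_singleton q') hpne, measure_univ]
      exact tsub_add_cancel_of_le (prob_le_one)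
    haveI := hprob'
    have hsupp' : πnew (stdSimplex ℝ X) = 1 := by
      have h1 : πnew (stdSimplex ℝ X)ᶜ = 0 := by
        rw [hπnew]
        simp only [Measure.add_apply, Measure.smul_apply, smul_eq_mul]
        have ha : πstar.restrict {q'}ᶜ (stdSimplex ℝ X)ᶜ = 0 := by
          rw [Measure.restrict_apply hmsimp.compl]
          exact le_antisymm ((measure_mono Set.inter_subset_left).trans hcompl.le) zero_le
        rw [ha, (prob_compl_eq_zero_iff hmsimp).mpr hπ'supp, mul_zero, add_zero]
      exact (prob_compl_eq_zero_iff hmsimp).mp h1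
    -- integral computations
    have hbar' : (∫ q'', q'' ∂πnew) = qbar := by
      rw [hπnew, integral_mix πstar π' hsupp hπ'supp q' (fun q'' => q'') continuous_id', hbar, hπ'bar]
      abel
    have hmixH := integral_mix πstar π' hsupp hπ'supp q'
      (fun q'' => H q'' - H qbar) (hHc.sub continuous_const)
    have hmixU := integral_mix πstar π' hsupp hπ'supp q'
      (fun q'' => uhat u q'' - uhat u qbar) (hUc.sub continuous_const)
    -- rewrite integrals over π' of (· - at qbar) in terms of (· - at q')
    have hshiftH : (∫ q'', (H q'' - H qbar) ∂π')
        = (∫ q'', (H q'' - H q') ∂π') + (H q' - H qbar) := by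
      have : Integrable (fun q'' => H q'' - H q') π' :=
        integrable_of_cont π' hπ'supp _ (hHc.sub continuous_const)
      rw [show (fun q'' => H q'' - H qbar)
          = (fun q'' => (H q'' - H q') + (H q' - H qbar)) by funext q''; ring]
      rw [integral_add this (integrable_const _), integral_const, probReal_univ]
      simp
    have hshiftU : (∫ q'', (uhat u q'' - uhat u qbar) ∂π')
        = (∫ q'', (uhat u q'' - uhat u q') ∂π') + (uhat u q' - uhat u qbar) := by
      have : Integrable (fun q'' => uhat u q'' - uhat u q') π' :=
        integrable_of_cont π' hπ'supp _ (hUc.sub continuous_const)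
      rw [show (fun q'' => uhat u q'' - uhat u qbar)
          = (fun q'' => (uhat u q'' - uhat u q') + (uhat u q' - uhat u qbar)) by
            funext q''; ring]
      rw [integral_add this (integrable_const _), integral_const, probReal_univ]
      simp
    have hIH : (∫ q'', (H q'' - H qbar) ∂πnew)
        = (∫ q'', (H q'' - H qbar) ∂πstar) + p * (∫ q'', (H q'' - H q') ∂π') := by
      rw [hπnew, hmixH, hshiftH]; simp only [smul_eq_mul]; ring
    have hIU : (∫ q'', (uhat u q'' - uhat u qbar) ∂πnew)
        = (∫ q'', (uhat u q'' - uhat u qbar) ∂πstar)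
          + p * (∫ q'', (uhat u q'' - uhat u q') ∂π') := by
      rw [hπnew, hmixU, hshiftU]; simp only [smul_eq_mul]; ring
    -- feasibility of πnew at qbar
    have hcon' : (κ / χ) * (∫ q'', (H q'' - H qbar) ∂πnew)
        ≤ ∫ q'', (uhat u q'' - uhat u qbar) ∂πnew := by
      rw [hIH, hIU]
      have h2 : (κ / χ) * (∫ q'', (H q'' - H q') ∂π')
          ≤ ∫ q'', (uhat u q'' - uhat u q') ∂π' := hπ'con
      nlinarith [hppos.le, hcon]
    have := hmax πnew ⟨hprob', hsupp', hbar', hcon'⟩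
    rw [hIH] at this
    nlinarith
  have : IsGreatest V 0 := ⟨h0mem, hub⟩
  rw [Jbar, ← hVdef, this.csSup_eq]
end

section
/- Let a < b be real numbers, m ∈ [a, b], and let h : [a, b] → ℝ be continuous and strictly convex. Among all Borel probability measures π on [a, b] with mean ∫ x dπ(x) = m, the integral ∫ h dπ is maximized by the two-point measure π* = ((b − m)/(b − a))·δ_a + ((m − a)/(b − a))·δ_b, and π* is the unique maximizer. (Key step in the proof of the paper's Proposition 7.) -/
open MeasureTheory Set
open scoped ENNReal

lemma aux_integrable_dirac (f : ℝ → ℝ) (a : ℝ) : Integrable f (Measure.dirac a) := by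
  refine (integrable_const (f a)).congr ?_
  exact (ae_eq_dirac f).symm

lemma aux_integral_two_point (f : ℝ → ℝ) (a b p q : ℝ) (hp : 0 ≤ p) (hq : 0 ≤ q) :
    ∫ x, f x ∂(ENNReal.ofReal p • Measure.dirac a + ENNReal.ofReal q • Measure.dirac b)
      = p * f a + q * f b := by
  rw [integral_add_measure ((aux_integrable_dirac f a).smul_measure ENNReal.ofReal_ne_top)
      ((aux_integrable_dirac f b).smul_measure ENNReal.ofReal_ne_top),
    integral_smul_measure, integral_smul_measure, integral_dirac, integral_dirac,
    ENNReal.toReal_ofReal hp, ENNReal.toReal_ofReal hq]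
  simp [smul_eq_mul]

lemma aux_two_point_repr (π : Measure ℝ) (a b : ℝ) (hab : a ≠ b)
    (hnull : π ({a, b} : Set ℝ)ᶜ = 0) :
    π = π {a} • Measure.dirac a + π {b} • Measure.dirac b := by
  classical
  ext s hs
  have h1 : π s = π (s ∩ {a, b}) := by
    have : π (s \ ({a, b} : Set ℝ)) = 0 :=
      measure_mono_null (diff_subset_compl s _) hnull
    rw [← measure_inter_add_diff s (by measurability : MeasurableSet ({a,b} : Set ℝ)), this,
      add_zero]
  have h2 : s ∩ ({a, b} : Set ℝ) = (s ∩ {a}) ∪ (s ∩ {b}) := by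
    rw [← inter_union_distrib_left]; rfl
  have h3 : π (s ∩ {a} ∪ s ∩ {b}) = π (s ∩ {a}) + π (s ∩ {b}) := by
    apply measure_union
    · exact Disjoint.mono inter_subset_right inter_subset_right
        (by simpa [disjoint_singleton] using hab)
    · exact hs.inter (measurableSet_singleton b)
  have ea : ∀ c : ℝ, s ∩ {c} = if c ∈ s then ({c} : Set ℝ) else ∅ := by
    intro c; by_cases hc : c ∈ s <;> simp [hc, inter_eq_right, singleton_subset_iff]
  rw [h1, h2, h3, Measure.add_apply, Measure.smul_apply, Measure.smul_apply,
    Measure.dirac_apply' a hs, Measure.dirac_apply' b hs, ea a, ea b]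
  by_cases ha : a ∈ s <;> by_cases hb : b ∈ s <;> simp [ha, hb, indicator]

/-- **key step in the proof of the paper's Proposition 7.** Let `a < b`,
`m ∈ [a, b]`, and `h : [a, b] → ℝ` continuous and strictly convex. Among all Borel
probability measures on `[a, b]` with mean `m`, the integral `∫ h dπ` is maximized by the
two-point measure `π* = ((b − m)/(b − a))·δ_a + ((m − a)/(b − a))·δ_b`, and `π*` is the
unique such maximizer. -/
theorem stmt13
    (a b : ℝ) (hab : a < b) (m : ℝ) (hm : m ∈ Icc a b)
    (h : ℝ → ℝ) (hcont : ContinuousOn h (Icc a b))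
    (hconv : StrictConvexOn ℝ (Icc a b) h)
    (πstar : Measure ℝ)
    (hπstar : πstar = (ENNReal.ofReal ((b - m) / (b - a))) • Measure.dirac a
      + (ENNReal.ofReal ((m - a) / (b - a))) • Measure.dirac b) :
    -- π* is admissible
    (IsProbabilityMeasure πstar ∧ πstar (Icc a b) = 1 ∧ (∫ x, x ∂πstar) = m) ∧
    -- π* maximizes ∫ h dπ among admissible π
    (∀ π : Measure ℝ, IsProbabilityMeasure π → π (Icc a b) = 1 → (∫ x, x ∂π) = m →
      (∫ x, h x ∂π) ≤ ∫ x, h x ∂πstar) ∧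
    -- π* is the unique maximizer
    (∀ π : Measure ℝ, IsProbabilityMeasure π → π (Icc a b) = 1 → (∫ x, x ∂π) = m →
      (∫ x, h x ∂π) = (∫ x, h x ∂πstar) → π = πstar) := by
  have hba : (0:ℝ) < b - a := by linarith
  have hwa : (0:ℝ) ≤ (b - m) / (b - a) := div_nonneg (by linarith [hm.2]) hba.le
  have hwb : (0:ℝ) ≤ (m - a) / (b - a) := div_nonneg (by linarith [hm.1]) hba.le
  have hwsum : (b - m) / (b - a) + (m - a) / (b - a) = 1 := by field_simp; ring
  -- the chord
  set c0 : ℝ := (b * h a - a * h b) / (b - a) with hc0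
  set c1 : ℝ := (h b - h a) / (b - a) with hc1
  have hchord : ∀ x ∈ Icc a b, h x ≤ c0 + c1 * x := by
    intro x hx
    rcases hx with ⟨hxa, hxb⟩
    have key := hconv.convexOn.2 (left_mem_Icc.2 hab.le) (right_mem_Icc.2 hab.le)
      (div_nonneg (by linarith : (0:ℝ) ≤ b - x) hba.le)
      (div_nonneg (by linarith : (0:ℝ) ≤ x - a) hba.le)
      (by field_simp; ring)
    have e1 : ((b - x) / (b - a)) • a + ((x - a) / (b - a)) • b = x := by
      rw [smul_eq_mul, smul_eq_mul, div_mul_eq_mul_div, div_mul_eq_mul_div, ← add_div,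
        div_eq_iff hba.ne']; ring
    have e2 : ((b - x) / (b - a)) * h a + ((x - a) / (b - a)) * h b = c0 + c1 * x := by
      rw [hc0, hc1]; field_simp; ring
    rw [e1, smul_eq_mul, smul_eq_mul, e2] at key
    exact key
  have hchord_lt : ∀ x ∈ Ioo a b, h x < c0 + c1 * x := by
    intro x hx
    rcases hx with ⟨hxa, hxb⟩
    have key := hconv.2 (left_mem_Icc.2 hab.le) (right_mem_Icc.2 hab.le) hab.ne
      (div_pos (by linarith : (0:ℝ) < b - x) hba)
      (div_pos (by linarith : (0:ℝ) < x - a) hba)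
      (by field_simp; ring)
    have e1 : ((b - x) / (b - a)) • a + ((x - a) / (b - a)) • b = x := by
      rw [smul_eq_mul, smul_eq_mul, div_mul_eq_mul_div, div_mul_eq_mul_div, ← add_div,
        div_eq_iff hba.ne']; ring
    have e2 : ((b - x) / (b - a)) * h a + ((x - a) / (b - a)) * h b = c0 + c1 * x := by
      rw [hc0, hc1]; field_simp; ring
    rw [e1] at key
    calc h x < ((b - x) / (b - a)) • h a + ((x - a) / (b - a)) • h b := key
    _ = c0 + c1 * x := by rw [smul_eq_mul, smul_eq_mul]; exact e2
  have hstar_val : (∫ x, h x ∂πstar) = c0 + c1 * m := by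
    rw [hπstar, aux_integral_two_point h a b _ _ hwa hwb, hc0, hc1]
    field_simp; ring
  -- part 1
  have part1 : IsProbabilityMeasure πstar ∧ πstar (Icc a b) = 1 ∧ (∫ x, x ∂πstar) = m := by
    refine ⟨⟨?_⟩, ?_, ?_⟩
    · rw [hπstar]
      simp only [Measure.add_apply, Measure.smul_apply, smul_eq_mul,
        Measure.dirac_apply_of_mem (mem_univ a), Measure.dirac_apply_of_mem (mem_univ b),
        mul_one]
      rw [← ENNReal.ofReal_add hwa hwb, hwsum, ENNReal.ofReal_one]
    · rw [hπstar]
      simp only [Measure.add_apply, Measure.smul_apply, smul_eq_mul,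
        Measure.dirac_apply_of_mem (left_mem_Icc.2 hab.le),
        Measure.dirac_apply_of_mem (right_mem_Icc.2 hab.le), mul_one]
      rw [← ENNReal.ofReal_add hwa hwb, hwsum, ENNReal.ofReal_one]
    · rw [hπstar, aux_integral_two_point (fun x => x) a b _ _ hwa hwb]
      field_simp; ring
  -- common facts for admissible π
  set cl : ℝ → ℝ := fun x => min (max x a) b with hcl
  have hclcont : Continuous cl := (continuous_id.max continuous_const).min continuous_const
  have hclmem : ∀ x, cl x ∈ Icc a b :=
    fun x => ⟨le_min (le_max_right x a) hab.le, min_le_right _ b⟩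
  have hclid : ∀ x ∈ Icc a b, cl x = x := by
    intro x hx
    simp [hcl, max_eq_left hx.1, min_eq_left hx.2]
  obtain ⟨C, hC⟩ := isCompact_Icc.exists_bound_of_continuousOn hcont
  have hHcont : Continuous (fun x => h (cl x)) := hcont.comp_continuous hclcont hclmem
  have main : ∀ π : Measure ℝ, IsProbabilityMeasure π → π (Icc a b) = 1 → (∫ x, x ∂π) = m →
      (∫ x, h x ∂π) ≤ c0 + c1 * m ∧
        ((∫ x, h x ∂π) = c0 + c1 * m → π (Ioo a b) = 0) := by
    intro π hprob hsupp hmean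
    haveI := hprob
    have hcompl : π ((Icc a b)ᶜ) = 0 := by
      have := measure_compl (s := Icc a b) measurableSet_Icc (measure_ne_top π _)
      rw [hsupp, measure_univ] at this
      simpa using this
    have hHint : Integrable (fun x => h (cl x)) π := by
      refine (integrable_const C).mono' hHcont.aestronglyMeasurable ?_
      exact ae_of_all _ fun x => hC _ (hclmem x)
    have hclint : Integrable cl π := by
      refine (integrable_const (|a| + |b|)).mono' hclcont.aestronglyMeasurable ?_
      refine ae_of_all _ fun x => ?_
      have h1 := (hclmem x).1
      have h2 := (hclmem x).2
      rw [Real.norm_eq_abs, abs_le]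
      constructor
      · have := neg_abs_le a; have := abs_nonneg b; linarith
      · have := le_abs_self b; have := abs_nonneg a; linarith
    have hLint : Integrable (fun x => c0 + c1 * cl x) π :=
      (integrable_const c0).add (hclint.const_mul c1)
    have hae : (fun x => h (cl x)) =ᵐ[π] h := by
      refine measure_mono_null ?_ hcompl
      intro x hx
      simp only [mem_setOf_eq, mem_compl_iff] at hx ⊢
      intro hmem
      exact hx (by rw [hclid x hmem])
    have hclae : cl =ᵐ[π] (fun x => x) := by
      refine measure_mono_null ?_ hcompl
      intro x hx
      simp only [mem_setOf_eq, mem_compl_iff] at hx ⊢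
      intro hmem
      exact hx (hclid x hmem)
    have hclmean : ∫ x, cl x ∂π = m := by
      rw [integral_congr_ae hclae]; exact hmean
    have hLval : ∫ x, (c0 + c1 * cl x) ∂π = c0 + c1 * m := by
      rw [integral_add (integrable_const c0) (hclint.const_mul c1), integral_const,
        integral_const_mul, hclmean]
      simp [measure_univ]
    have hHval : ∫ x, h (cl x) ∂π = ∫ x, h x ∂π := integral_congr_ae hae
    constructor
    · calc (∫ x, h x ∂π) = ∫ x, h (cl x) ∂π := hHval.symm
        _ ≤ ∫ x, (c0 + c1 * cl x) ∂π :=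
            integral_mono hHint hLint (fun x => hchord _ (hclmem x))
        _ = c0 + c1 * m := hLval
    · intro heq
      have hg0 : ∫ x, ((c0 + c1 * cl x) - h (cl x)) ∂π = 0 := by
        rw [integral_sub hLint hHint, hLval, hHval, heq, sub_self]
      have hgae := (integral_eq_zero_iff_of_nonneg
        (fun x => sub_nonneg.2 (hchord _ (hclmem x))) (hLint.sub hHint)).1 hg0
      have h0 : ∀ᵐ x ∂π, (c0 + c1 * cl x) - h (cl x) = 0 := hgae
      refine measure_mono_null ?_ (ae_iff.mp h0)
      intro x hx
      simp only [mem_setOf_eq]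
      have hxIcc : x ∈ Icc a b := ⟨hx.1.le, hx.2.le⟩
      have := hchord_lt x hx
      rw [hclid x hxIcc]
      intro hcontra
      linarith
  refine ⟨part1, fun π h1 h2 h3 => by rw [hstar_val]; exact (main π h1 h2 h3).1, ?_⟩
  intro π hprob hsupp hmean heq
  haveI := hprob
  have hIoo : π (Ioo a b) = 0 := (main π hprob hsupp hmean).2 (by rw [← hstar_val]; exact heq)
  have hcompl : π ((Icc a b)ᶜ) = 0 := by
    have := measure_compl (s := Icc a b) measurableSet_Icc (measure_ne_top π _)
    rw [hsupp, measure_univ] at this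
    simpa using this
  have hnull : π ({a, b} : Set ℝ)ᶜ = 0 := by
    refine measure_mono_null ?_ (measure_union_null hcompl hIoo)
    intro x hx
    simp only [mem_compl_iff, mem_insert_iff, mem_singleton_iff, not_or] at hx
    by_cases hmem : x ∈ Icc a b
    · exact Or.inr ⟨lt_of_le_of_ne hmem.1 (Ne.symm hx.1), lt_of_le_of_ne hmem.2 hx.2⟩
    · exact Or.inl hmem
  have repr := aux_two_point_repr π a b hab.ne hnull
  set α := π {a} with hα
  set β := π {b} with hβ
  have hαt : α ≠ ⊤ := (measure_ne_top π _)
  have hβt : β ≠ ⊤ := (measure_ne_top π _)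
  have huniv : α + β = 1 := by
    have := congrArg (fun μ : Measure ℝ => μ univ) repr
    simpa [Measure.add_apply, Measure.smul_apply, smul_eq_mul,
      Measure.dirac_apply_of_mem (mem_univ a), Measure.dirac_apply_of_mem (mem_univ b),
      measure_univ] using this.symm
  have hαr : α = ENNReal.ofReal α.toReal := (ENNReal.ofReal_toReal hαt).symm
  have hβr : β = ENNReal.ofReal β.toReal := (ENNReal.ofReal_toReal hβt).symm
  have hpq : α.toReal + β.toReal = 1 := by
    rw [← ENNReal.toReal_add hαt hβt, huniv, ENNReal.toReal_one]
  have hmean2 : α.toReal * a + β.toReal * b = m := by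
    rw [← hmean]
    conv_rhs => rw [repr, hαr, hβr]
    rw [aux_integral_two_point (fun x => x) a b _ _ ENNReal.toReal_nonneg ENNReal.toReal_nonneg]
  have hp : α.toReal = (b - m) / (b - a) := by
    rw [eq_div_iff hba.ne']
    linear_combination b * hpq - hmean2
  have hq : β.toReal = (m - a) / (b - a) := by
    rw [eq_div_iff hba.ne']
    linear_combination hmean2 - a * hpq
  rw [repr, hπstar, hαr, hβr, hp, hq]
end
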